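/- Let (X, ≤) be a well-quasi-ordered set under the subword (subsequence) ordering on words over a finite alphabet M. Any subset of M* closed under taking subwords is a regular language. -/

import Mathlib

open List
open Classical

section Greedy

variable {M : Type}

/-- One step of the greedy subword matcher for pattern `l`: the state is the number of
letters of `l` matched so far. -/
noncomputable def stepb (l : List M) (i : Fin (l.length + 1)) (a : M) : Fin (l.length + 1) :=
  if h : ∃ hi : (i : ℕ) < l.length, l.get ⟨i, hi⟩ = a then
    ⟨(i : ℕ) + 1, by obtain ⟨hi, -⟩ := h; omega⟩
  else i

theorem stepb_le (l : List M) (i : Fin (l.length + 1)) (a : M) :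
    (i : ℕ) ≤ (stepb l i a : ℕ) := by
  unfold stepb; split <;> simp

theorem stepb_take_sublist (l : List M) (i : Fin (l.length + 1)) (a : M) (v : List M)
    (h : l.take i <+ v) : l.take (stepb l i a) <+ v ++ [a] := by
  unfold stepb; split
  · rename_i h'
    obtain ⟨hi, ha⟩ := h'
    simp only [Fin.val_mk]
    rw [← take_concat_get' l i hi]
    have : l[(i : ℕ)] = a := by simpa [List.get_eq_getElem] using ha
    rw [this]
    exact h.append (Sublist.refl [a])
  · exact h.trans (sublist_append_left v [a])

theorem stepb_ge (l : List M) (i : Fin (l.length + 1)) (a : M) (v : List M)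
    (hv : ∀ k, k ≤ l.length → l.take k <+ v → k ≤ (i : ℕ)) :
    ∀ k, k ≤ l.length → l.take k <+ v ++ [a] → k ≤ (stepb l i a : ℕ) := by
  intro k hk hsub
  rcases sublist_append_iff.1 hsub with ⟨l₁, l₂, heq, h1, h2⟩
  rcases sublist_singleton.1 h2 with rfl | rfl
  · -- last letter not used
    rw [append_nil] at heq
    exact le_trans (hv k hk (heq ▸ h1)) (stepb_le l i a)
  · -- last letter used: l.take k = l₁ ++ [a]
    have hk0 : k ≠ 0 := by
      rintro rfl; simp at heq
    have hklt : k - 1 < l.length := by omega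
    have htake : l.take k = l.take (k - 1) ++ [l[k - 1]] := by
      rw [take_concat_get' l (k - 1) hklt]
      congr 1; omega
    rw [htake] at heq
    obtain ⟨hl₁, ha⟩ := append_inj' heq.symm rfl
    replace ha : l[k - 1] = a := by
      have := ha; simpa using this.symm
    have hk1 : k - 1 ≤ (i : ℕ) := hv (k - 1) (by omega) (hl₁ ▸ h1)
    unfold stepb; split
    · simp only [Fin.val_mk]; omega
    · rename_i h'
      -- show k ≤ i; if not, i = k - 1 and the step would have advanced
      by_contra hcon
      have hik : (i : ℕ) = k - 1 := by omega
      have hi : (i : ℕ) < l.length := by omega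
      exact h' ⟨hi, by simp only [List.get_eq_getElem]; simp only [hik]; exact ha⟩

theorem foldl_take_sublist (l : List M) :
    ∀ (w v : List M) (i : Fin (l.length + 1)), l.take i <+ v →
      l.take (List.foldl (stepb l) i w).val <+ v ++ w := by
  intro w
  induction w with
  | nil => intro v i h; simpa using h
  | cons a w ih =>
    intro v i h
    have := ih (v ++ [a]) (stepb l i a) (stepb_take_sublist l i a v h)
    simpa [List.append_assoc] using this

theorem foldl_ge (l : List M) :
    ∀ (w v : List M) (i : Fin (l.length + 1)),
      (∀ k, k ≤ l.length → l.take k <+ v → k ≤ (i : ℕ)) →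
      ∀ k, k ≤ l.length → l.take k <+ v ++ w → k ≤ (List.foldl (stepb l) i w).val := by
  intro w
  induction w with
  | nil => intro v i h k hk hsub; exact h k hk (by simpa using hsub)
  | cons a w ih =>
    intro v i h k hk hsub
    refine ih (v ++ [a]) (stepb l i a) (stepb_ge l i a v h) k hk ?_
    simpa [List.append_assoc] using hsub

/-- The greedy matcher reaches the full pattern iff the pattern is a subword. -/
theorem foldl_full_iff (l w : List M) :
    (List.foldl (stepb l) ⟨0, Nat.succ_pos _⟩ w).val = l.length ↔ l <+ w := by
  constructor
  · intro h
    have := foldl_take_sublist l w [] ⟨0, Nat.succ_pos _⟩ (by simp)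
    rwa [h, take_length, nil_append] at this
  · intro h
    have h0 : ∀ k, k ≤ l.length → l.take k <+ ([] : List M) →
        k ≤ ((⟨0, Nat.succ_pos _⟩ : Fin (l.length + 1)) : ℕ) := by
      intro k hk hsub
      rcases take_eq_nil_iff.1 (sublist_nil.1 hsub) with rfl | rfl
      · simp
      · simpa using hk
    have := foldl_ge l w [] ⟨0, Nat.succ_pos _⟩ h0 l.length le_rfl
      (by simpa [take_length] using h)
    have hle : (List.foldl (stepb l) ⟨0, Nat.succ_pos _⟩ w).val ≤ l.length :=
      Nat.lt_succ_iff.1 (List.foldl (stepb l) ⟨0, Nat.succ_pos _⟩ w).isLt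
    omega

/-- Componentwise computation of a product `foldl`. -/
theorem foldl_pi {ι : Type*} {β : ι → Type*} (g : ∀ i, β i → M → β i)
    (f : ∀ i, β i) (w : List M) (i : ι) :
    (List.foldl (fun f a i => g i (f i) a) f w) i = List.foldl (g i) (f i) w := by
  induction w generalizing f with
  | nil => rfl
  | cons a w ih => simpa using ih (fun i => g i (f i) a)

end Greedy

/-- Over a finite alphabet `M`, any set of words closed under taking subwords
(scattered subsequences, `List.Sublist`) is a regular language.
(The closure under subwords makes the complement of `S` upward closed for the
subword well-quasi-order given by Higman's lemma, whence regularity.) -/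
theorem subword_closed_isRegular {M : Type} [Fintype M] (S : Language M)
    (hS : ∀ w ∈ S, ∀ u : List M, u.Sublist w → u ∈ S) :
    S.IsRegular := by
  classical
  -- Higman's lemma: the subword order is a wqo on `List M`.
  have h1 : (Set.univ : Set M).PartiallyWellOrderedOn (Eq : M → M → Prop) :=
    Set.finite_univ.partiallyWellOrderedOn
  have h2 := Set.PartiallyWellOrderedOn.partiallyWellOrderedOn_sublistForall₂
    (Eq : M → M → Prop) h1
  have hwqo : (Set.univ : Set (List M)).PartiallyWellOrderedOn (· <+ ·) := by
    intro f
    obtain ⟨m, n, hmn, hr⟩ := h2 (fun k => ⟨(f k).1, fun x _ => Set.mem_univ x⟩)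
    refine ⟨m, n, hmn, ?_⟩
    change List.SublistForall₂ Eq (f m).1 (f n).1 at hr
    change (f m).1 <+ (f n).1
    obtain ⟨l, hfor, hsub⟩ := List.sublistForall₂_iff.1 hr
    have he : (f m).1 = l := by rw [← List.forall₂_eq_eq_eq]; exact hfor
    rw [he]; exact hsub
  -- The complement of `S` and its set of minimal elements.
  set T : Set (List M) := {w | w ∉ S} with hT
  set B : Set (List M) := {b | b ∈ T ∧ ∀ x ∈ T, x <+ b → x = b} with hB
  have hA : IsAntichain (· <+ ·) B := by
    intro a ha b hb hne hsub
    exact hne (hb.2 a ha.1 hsub)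
  have hBfin : B.Finite :=
    hA.finite_of_partiallyWellOrderedOn (hwqo.mono (Set.subset_univ B))
  -- every element of `T` lies above a minimal one
  have hmin : ∀ (n : ℕ) (w : List M), w.length ≤ n → w ∈ T → ∃ b ∈ B, b <+ w := by
    intro n
    induction n with
    | zero =>
      intro w hw hTw
      have : w = [] := List.length_eq_zero_iff.1 (Nat.le_zero.1 hw)
      subst this
      exact ⟨[], ⟨hTw, fun x _ hx => List.sublist_nil.1 hx⟩, List.Sublist.refl _⟩
    | succ n ih =>
      intro w hw hTw
      by_cases h : ∃ x ∈ T, x <+ w ∧ x ≠ w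
      · obtain ⟨x, hxT, hxsub, hxne⟩ := h
        have hlt : x.length < w.length :=
          lt_of_le_of_ne hxsub.length_le fun he => hxne (hxsub.eq_of_length he)
        obtain ⟨b, hb, hbs⟩ := ih x (by omega) hxT
        exact ⟨b, hb, hbs.trans hxsub⟩
      · push_neg at h
        exact ⟨w, ⟨hTw, fun x hx hsub => h x hx hsub⟩, List.Sublist.refl w⟩
  -- characterization of `S`
  have hchar : ∀ w : List M, w ∈ S ↔ ∀ b ∈ B, ¬ b <+ w := by
    intro w
    constructor
    · intro hw b hb hsub
      exact hb.1 (hS w hw b hsub)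
    · intro h
      by_contra hw
      obtain ⟨b, hb, hbs⟩ := hmin w.length w le_rfl hw
      exact h b hb hbs
  -- build the DFA
  let B' := hBfin.toFinset
  let σ := ∀ b : B', Fin ((b : List M).length + 1)
  let dfa : DFA M σ :=
    { step := fun f a b => stepb (b : List M) (f b) a
      start := fun _ => ⟨0, Nat.succ_pos _⟩
      accept := {f | ∀ b : B', ((f b : ℕ) ≠ (b : List M).length)} }
  refine ⟨σ, inferInstance, dfa, ?_⟩
  ext w
  rw [DFA.mem_accepts]
  have heval : ∀ b : B', (dfa.eval w b).val =
      (List.foldl (stepb (b : List M)) ⟨0, Nat.succ_pos _⟩ w).val := by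
    intro b
    have := foldl_pi (ι := B') (β := fun b => Fin ((b : List M).length + 1))
      (fun b i a => stepb (b : List M) i a) (fun _ => ⟨0, Nat.succ_pos _⟩) w b
    simp only [DFA.eval, DFA.evalFrom]
    rw [this]
  constructor
  · intro hacc
    rw [hchar]
    intro b hb hsub
    have hb' : b ∈ B' := hBfin.mem_toFinset.2 hb
    have := hacc ⟨b, hb'⟩
    rw [heval ⟨b, hb'⟩] at this
    exact this ((foldl_full_iff b w).2 hsub)
  · intro hw b
    rw [heval b, Ne, foldl_full_iff]
    exact (hchar w).1 hw (b : List M) (hBfin.mem_toFinset.1 b.2)
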